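/- arXiv:1908.01026 — 6 statements merged into one kernel-verified Lean document; each statement's English description precedes it below -/
import Mathlib

section
/- A Euclidean billiard partition π is irreducible (i.e., no single part of π can be decreased by 2 while keeping the result a Euclidean billiard partition with the same number of parts) if and only if: the smallest part equals 2, no two adjacent parts are both odd, and the difference between any two adjacent parts is at most 2. -/
/-- A Euclidean billiard partition: a strictly decreasing list of positive
integers, whose smallest (last) part is even, and in which no two adjacent
parts are both odd. -/
def EBP (L : List ℕ) : Prop :=
  L ≠ [] ∧ (∀ m ∈ L, 0 < m) ∧ L.Chain' (· > ·) ∧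
    Even (L.getLastD 1) ∧ L.Chain' fun a b => ¬(Odd a ∧ Odd b)


/-- `π` is irreducible if no single part can be decreased by 2 so that the
result is again a Euclidean billiard partition. -/
def Irreducible' (L : List ℕ) : Prop :=
  ∀ i < L.length, ¬ EBP (L.set i (L.getD i 0 - 2))

lemma lastD_eq (L : List ℕ) (h : L ≠ []) :
    L.getLastD 1 = L[L.length-1]'(Nat.sub_lt (List.length_pos_iff.mpr h) one_pos) := by
  rw [List.getLastD_eq_getLast?, List.getLast?_eq_getLast h, List.getLast_eq_getElem]
  rfl

lemma lastD_set (L : List ℕ) (h : L ≠ []) (i v : ℕ) :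
    (L.set i v).getLastD 1 =
      if i = L.length - 1 then v else L.getLastD 1 := by
  have h' : L.set i v ≠ [] := by simp [h]
  rw [lastD_eq _ h', lastD_eq _ h]
  simp only [List.length_set, List.getElem_set]

lemma getElem_congr' (L : List ℕ) {i j : ℕ} (h : i = j) (hi : i < L.length) :
    L[i] = L[j]'(h ▸ hi) := by subst h; rfl

set_option maxHeartbeats 1000000 in
/-- A Euclidean billiard partition is irreducible iff its smallest part is 2
and adjacent parts differ by at most 2 (the no-two-adjacent-odd condition
being part of the definition of a Euclidean billiard partition). -/
theorem irreducibleEBP_iff (L : List ℕ) (hL : EBP L) :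
    Irreducible' L ↔
      L.getLastD 1 = 2 ∧ L.Chain' (fun a b => a ≤ b + 2) := by
  obtain ⟨hne, hpos, hdec, hlast, hpar⟩ := hL
  have hlen : 0 < L.length := List.length_pos_iff.mpr hne
  have hslt : L.length - 1 < L.length := Nat.sub_lt hlen one_pos
  rw [lastD_eq L hne] at hlast ⊢
  rw [List.Chain', List.isChain_iff_getElem] at hdec hpar
  rw [List.Chain', List.isChain_iff_getElem]
  constructor
  · intro hirr
    have hpos' : ∀ j (h : j < L.length), 0 < L[j] := fun j hj =>
      hpos _ (List.getElem_mem hj)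
    constructor
    · by_contra h2
      have h4 : 4 ≤ L[L.length-1]'hslt := by
        have h1 := hpos' (L.length - 1) hslt
        rw [Nat.even_iff] at hlast
        omega
      apply hirr (L.length - 1) hslt
      rw [List.getD_eq_getElem L 0 hslt]
      refine ⟨by simp [hne], ?_, ?_, ?_, ?_⟩
      · intro m hm
        rw [List.mem_iff_getElem] at hm
        obtain ⟨j, hj, hjm⟩ := hm
        rw [List.getElem_set] at hjm
        rw [List.length_set] at hj
        split at hjm
        · omega
        · exact hjm ▸ hpos' j hj
      · rw [List.Chain', List.isChain_iff_getElem]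
        simp only [List.get_eq_getElem, List.length_set, List.getElem_set]
        intro k hk
        rcases eq_or_ne (L.length - 1) k with e | e
        · exfalso; omega
        rw [if_neg e]
        rcases eq_or_ne (L.length - 1) (k+1) with e' | e'
        · rw [if_pos e']
          have hc := getElem_congr' L e' hslt
          have := hdec k (by omega)
          omega
        · rw [if_neg e']
          exact hdec k (by omega)
      · rw [lastD_set _ hne, if_pos rfl]
        rw [Nat.even_iff] at hlast ⊢
        omega
      · rw [List.Chain', List.isChain_iff_getElem]
        simp only [List.get_eq_getElem, List.length_set, List.getElem_set]
        intro k hk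
        rcases eq_or_ne (L.length - 1) k with e | e
        · exfalso; omega
        rw [if_neg e]
        rcases eq_or_ne (L.length - 1) (k+1) with e' | e'
        · rw [if_pos e']
          have hc := getElem_congr' L e' hslt
          rw [Nat.even_iff] at hlast
          simp only [Nat.odd_iff]
          omega
        · rw [if_neg e']
          exact hpar k (by omega)
    · intro j hj
      by_contra hgap
      push_neg at hgap
      have hj' : j < L.length := by omega
      have hj1 : j + 1 < L.length := by omega
      apply hirr j hj'
      rw [List.getD_eq_getElem L 0 hj']
      have hnotlast : j ≠ L.length - 1 := by omega
      have hp1 := hpos' (j+1) hj1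
      refine ⟨by simp [hne], ?_, ?_, ?_, ?_⟩
      · intro m hm
        rw [List.mem_iff_getElem] at hm
        obtain ⟨k, hk, hkm⟩ := hm
        rw [List.getElem_set] at hkm
        rw [List.length_set] at hk
        split at hkm
        · omega
        · exact hkm ▸ hpos' k hk
      · rw [List.Chain', List.isChain_iff_getElem]
        simp only [List.get_eq_getElem, List.length_set, List.getElem_set]
        intro k hk
        rcases eq_or_ne j k with e | e
        · subst e
          rw [if_pos rfl, if_neg (by omega)]
          omega
        rw [if_neg e]
        rcases eq_or_ne j (k+1) with e' | e'
        · subst e'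
          rw [if_pos rfl]
          have := hdec k (by omega)
          omega
        · rw [if_neg e']
          exact hdec k (by omega)
      · rw [lastD_set _ hne, if_neg hnotlast, lastD_eq _ hne]
        exact hlast
      · rw [List.Chain', List.isChain_iff_getElem]
        simp only [List.get_eq_getElem, List.length_set, List.getElem_set]
        intro k hk
        rcases eq_or_ne j k with e | e
        · subst e
          rw [if_pos rfl, if_neg (by omega)]
          have h1 := hpar j (by omega)
          simp only [Nat.odd_iff] at h1 ⊢
          omega
        rw [if_neg e]
        rcases eq_or_ne j (k+1) with e' | e'
        · subst e'
          rw [if_pos rfl]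
          have h1 := hpar k (by omega)
          simp only [Nat.odd_iff] at h1 ⊢
          omega
        · rw [if_neg e']
          exact hpar k (by omega)
  · rintro ⟨h2, hgap⟩
    intro i hi hEBP
    obtain ⟨hne', hpos', hdec', _, _⟩ := hEBP
    rw [List.getD_eq_getElem L 0 hi] at hpos' hdec'
    rw [List.Chain', List.isChain_iff_getElem] at hdec'
    simp only [List.get_eq_getElem, List.length_set, List.getElem_set] at hdec'
    rcases eq_or_ne i (L.length - 1) with hil | hil
    · subst hil
      have h0 : (0:ℕ) ∈ L.set (L.length - 1) (L[L.length-1]'hslt - 2) := by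
        rw [List.mem_iff_getElem]
        refine ⟨L.length - 1, by simpa using hslt, ?_⟩
        rw [List.getElem_set, if_pos rfl]
        omega
      exact absurd (hpos' 0 h0) (by omega)
    · have hi1 : i + 1 < L.length := by omega
      have hg := hgap i (by omega)
      have hd := hdec' i (by omega)
      rw [if_pos rfl, if_neg (by omega)] at hd
      omega
end

section
/- Every Euclidean billiard partition π with d parts can be uniquely written as π = π₁ + π₂ (componentwise sum of parts), where π₁ is an irreducible Euclidean billiard partition with d parts and π₂ is a weakly decreasing sequence of d nonnegative even integers; conversely, every such sum is a Euclidean billiard partition. -/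
/-- An irreducible Euclidean billiard partition: additionally the smallest
part equals 2 and adjacent parts differ by at most 2. -/
def IrrEBP (L : List ℕ) : Prop :=
  EBP L ∧ L.getLastD 1 = 2 ∧ L.Chain' fun a b => a ≤ b + 2

namespace EBPaux

def core : List ℕ → List ℕ
  | [] => []
  | [_] => [2]
  | m :: m' :: l =>
      ((core (m' :: l)).headD 0 + (if m % 2 = m' % 2 then 2 else 1)) :: core (m' :: l)

theorem core_cons (m : ℕ) (l : List ℕ) : ∃ c t, core (m :: l) = c :: t := by
  cases l with
  | nil => exact ⟨2, [], rfl⟩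
  | cons m' l => exact ⟨_, _, rfl⟩

theorem core_length : ∀ (l : List ℕ) (m : ℕ), (core (m :: l)).length = (m :: l).length
  | [], _ => rfl
  | m' :: l, m => by
      simp only [core, List.length_cons]
      rw [core_length l m']
      simp

theorem core_getLastD : ∀ (l : List ℕ) (m d : ℕ), (core (m :: l)).getLastD d = 2
  | [], _, _ => rfl
  | m' :: l, m, d => by
      show (_ :: core (m' :: l)).getLastD d = 2
      rw [List.getLastD_cons]
      exact core_getLastD l m' _




theorem core_two_le : ∀ (l : List ℕ) (m : ℕ), ∀ x ∈ core (m :: l), 2 ≤ x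
  | [], m, x, hx => by
      simp only [core, List.mem_singleton] at hx; omega
  | m' :: l, m, x, hx => by
      obtain ⟨c, t, hc⟩ := core_cons m' l
      simp only [core, hc, List.mem_cons, List.headD_cons] at hx
      have hc2 : 2 ≤ c := core_two_le l m' c (by rw [hc]; exact List.mem_cons_self)
      rcases hx with h | h | h
      · subst h; split <;> omega
      · subst h; exact hc2
      · exact core_two_le l m' x (by rw [hc]; exact List.mem_cons_of_mem c h)

theorem core_chain : ∀ (l : List ℕ) (m : ℕ),
    (core (m :: l)).Chain' (fun a b => b < a ∧ a ≤ b + 2)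
  | [], _ => by simp [core]; exact List.isChain_singleton _
  | m' :: l, m => by
      obtain ⟨c, t, hc⟩ := core_cons m' l
      have ih := core_chain l m'
      show List.Chain' _ ((((core (m' :: l)).headD 0) + _) :: core (m' :: l))
      rw [hc] at ih ⊢
      simp only [List.headD_cons]
      refine List.isChain_cons_cons.mpr ⟨?_, ih⟩
      split <;> omega

theorem core_par_le : ∀ (l : List ℕ) (m : ℕ), (m :: l).Chain' (· > ·) →
    (∀ x ∈ m :: l, 0 < x) → Even ((m :: l).getLastD 1) →
    List.Forall₂ (fun a n => a % 2 = n % 2 ∧ a ≤ n) (core (m :: l)) (m :: l)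
  | [], m, _, hpos, hev => by
      have h1 : 0 < m := hpos m (by simp)
      have h2 : m % 2 = 0 := by
        rw [Nat.even_iff] at hev; simpa using hev
      simp only [core]
      exact List.Forall₂.cons ⟨by omega, by omega⟩ List.Forall₂.nil
  | m' :: l, m, hch, hpos, hev => by
      obtain ⟨c, t, hc⟩ := core_cons m' l
      have ih := core_par_le l m' (List.isChain_cons_cons.mp hch).2
        (fun x hx => hpos x (List.mem_cons_of_mem m hx))
        (by rw [List.getLastD_cons] at hev ⊢; rwa [List.getLastD_cons] at hev)
      have hmm' : m' < m := (List.isChain_cons_cons.mp hch).1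
      rw [hc] at ih
      obtain ⟨⟨hpar, hle⟩, _⟩ := List.forall₂_cons.mp ih
      show List.Forall₂ _ (((core (m' :: l)).headD 0 + _) :: core (m' :: l)) _
      rw [hc]
      simp only [List.headD_cons]
      refine List.Forall₂.cons ⟨?_, ?_⟩ ih <;> split <;> omega

/-- transfer a chain' along a Forall₂ -/
theorem chain'_transfer {α β : Type} {P : α → β → Prop} {R : β → β → Prop} {R' : α → α → Prop}
    (h : ∀ a a' b b', P a b → P a' b' → R b b' → R' a a') :
    ∀ (A : List α) (L : List β), List.Forall₂ P A L → List.Chain' R L → List.Chain' R' A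
  | [], _, _, _ => List.isChain_nil
  | [a], L, hf, _ => List.isChain_singleton a
  | a :: a' :: A, L, hf, hch => by
      cases hf with
      | cons hp hf' =>
        cases hf' with
        | cons hp' hf'' =>
          refine List.isChain_cons_cons.mpr ⟨h a a' _ _ hp hp' (List.isChain_cons_cons.mp hch).1, ?_⟩
          exact chain'_transfer h (a' :: A) _ (List.Forall₂.cons hp' hf'')
            (List.isChain_cons_cons.mp hch).2

theorem sub_even : ∀ {A L : List ℕ},
    List.Forall₂ (fun a n => a % 2 = n % 2 ∧ a ≤ n) A L →
    ∀ x ∈ List.zipWith (· - ·) L A, Even x := by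
  intro A L hf
  induction hf with
  | nil => simp
  | cons hp hf ih =>
      intro x hx
      simp only [List.zipWith_cons_cons, List.mem_cons] at hx
      rcases hx with h | h
      · subst h; rw [Nat.even_iff]; omega
      · exact ih x h

theorem sum_eq : ∀ {A L : List ℕ}, List.Forall₂ (fun a n => a ≤ n) A L →
    L = List.zipWith (· + ·) A (List.zipWith (· - ·) L A) := by
  intro A L hf
  induction hf with
  | nil => rfl
  | @cons a n A L hp hf ih =>
      simp only [List.zipWith_cons_cons]
      rw [← ih]
      congr 1
      omega

theorem sub_chain : ∀ (l : List ℕ) (m : ℕ), (m :: l).Chain' (· > ·) →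
    List.Forall₂ (fun a n => a % 2 = n % 2 ∧ a ≤ n) (core (m :: l)) (m :: l) →
    (List.zipWith (· - ·) (m :: l) (core (m :: l))).Chain' (· ≥ ·)
  | [], m, _, _ => by simp [core]; exact List.isChain_singleton _
  | m' :: l, m, hch, hf => by
      obtain ⟨c, t, hc⟩ := core_cons m' l
      have hmm' : m' < m := (List.isChain_cons_cons.mp hch).1
      simp only [core] at hf ⊢
      have hf2 := (List.forall₂_cons.mp hf).2
      have ih := sub_chain l m' (List.isChain_cons_cons.mp hch).2 hf2
      rw [hc] at hf2 ih ⊢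
      obtain ⟨⟨hpar, hle⟩, -⟩ := List.forall₂_cons.mp hf2
      simp only [List.headD_cons, List.zipWith_cons_cons] at ih ⊢
      refine List.isChain_cons_cons.mpr ⟨?_, ih⟩
      split <;> omega


theorem par_le_of_sum : ∀ (A B : List ℕ), A.length = B.length → (∀ x ∈ B, Even x) →
    List.Forall₂ (fun a n => a % 2 = n % 2 ∧ a ≤ n) A (List.zipWith (· + ·) A B)
  | [], [], _, _ => List.Forall₂.nil
  | a :: A, b :: B, hlen, hev => by
      simp only [List.zipWith_cons_cons]
      refine List.Forall₂.cons ⟨?_, ?_⟩ (par_le_of_sum A B (by simpa using hlen)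
        (fun x hx => hev x (List.mem_cons_of_mem b hx)))
      · have : b % 2 = 0 := Nat.even_iff.mp (hev b (List.mem_cons_self))
        omega
      · omega

theorem uniq_core : ∀ (l : List ℕ) (m : ℕ) (A : List ℕ),
    A.Chain' (· > ·) → A.Chain' (fun a b => a ≤ b + 2) → A.getLastD 1 = 2 →
    List.Forall₂ (fun a n => a % 2 = n % 2) A (m :: l) → A = core (m :: l)
  | [], m, A, _, _, hlast, hf => by
      cases hf with
      | cons hp hf' =>
        cases hf'
        simp only [List.getLastD_cons] at hlast
        simp [core]
        exact hlast
  | m' :: l, m, A, hdec, hgap, hlast, hf => by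
      cases hf with
      | @cons a _ A1 _ hp hf' =>
        cases hf' with
        | @cons a' _ A' _ hp' hf'' =>
          have ih := uniq_core l m' (a' :: A')
            (List.isChain_cons_cons.mp hdec).2 (List.isChain_cons_cons.mp hgap).2
            (by rwa [List.getLastD_cons] at hlast) (List.Forall₂.cons hp' hf'')
          have h1 : a' < a := (List.isChain_cons_cons.mp hdec).1
          have h2 : a ≤ a' + 2 := (List.isChain_cons_cons.mp hgap).1
          simp only [core, ← ih, List.headD_cons]
          congr 1
          split <;> omega

theorem sub_of_sum : ∀ (A B : List ℕ), A.length = B.length →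
    B = List.zipWith (· - ·) (List.zipWith (· + ·) A B) A
  | [], [], _ => rfl
  | a :: A, b :: B, hlen => by
      simp only [List.zipWith_cons_cons]
      rw [← sub_of_sum A B (by simpa using hlen)]
      congr 1
      omega

theorem zip_chain {f : ℕ → ℕ → ℕ} {R S T : ℕ → ℕ → Prop}
    (h : ∀ a a' b b', R a a' → S b b' → T (f a b) (f a' b')) :
    ∀ (A B : List ℕ), A.Chain' R → B.Chain' S → (List.zipWith f A B).Chain' T
  | [], _, _, _ => by simp; exact List.isChain_nil
  | _ :: _, [], _, _ => by simp; exact List.isChain_nil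
  | [_], _ :: _, _, _ => by simp; exact List.isChain_singleton _
  | _ :: _ :: _, [_], _, _ => by simp; exact List.isChain_singleton _
  | a :: a' :: A, b :: b' :: B, hA, hB => by
      simp only [List.zipWith_cons_cons]
      refine List.isChain_cons_cons.mpr ⟨h a a' b b' (List.isChain_cons_cons.mp hA).1
        (List.isChain_cons_cons.mp hB).1, ?_⟩
      have := zip_chain h (a' :: A) (b' :: B) (List.isChain_cons_cons.mp hA).2
        (List.isChain_cons_cons.mp hB).2
      exact this

theorem chain'_pair_of_all {P : ℕ → Prop} : ∀ (B : List ℕ), (∀ x ∈ B, P x) →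
    B.Chain' (fun a b => P a ∧ P b)
  | [], _ => List.isChain_nil
  | [b], _ => List.isChain_singleton b
  | b :: b' :: B, h => by
      refine List.isChain_cons_cons.mpr ⟨⟨h b (by simp), h b' (by simp)⟩, ?_⟩
      exact chain'_pair_of_all (b' :: B) (fun x hx => h x (List.mem_cons_of_mem b hx))

theorem zip_pos : ∀ (A B : List ℕ), (∀ a ∈ A, 0 < a) →
    ∀ x ∈ List.zipWith (· + ·) A B, 0 < x
  | [], _, _, _, hx => by simp at hx
  | _ :: _, [], _, _, hx => by simp at hx
  | a :: A, b :: B, h, x, hx => by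
      simp only [List.zipWith_cons_cons, List.mem_cons] at hx
      rcases hx with h' | h'
      · have := h a (by simp); omega
      · exact zip_pos A B (fun y hy => h y (List.mem_cons_of_mem a hy)) x h'

theorem zip_last : ∀ (A B : List ℕ) (a b d : ℕ), A.length = B.length →
    (List.zipWith (· + ·) (a :: A) (b :: B)).getLastD d
      = (a :: A).getLastD d + (b :: B).getLastD d
  | [], [], a, b, d, _ => rfl
  | a' :: A, b' :: B, a, b, d, hlen => by
      simp only [List.zipWith_cons_cons, List.getLastD_cons]
      have := zip_last A B a' b' d (by simpa using hlen)
      simp only [List.zipWith_cons_cons, List.getLastD_cons] at this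
      exact this

end EBPaux

open EBPaux

/-- Every Euclidean billiard partition with `d` parts is uniquely the
componentwise sum of an irreducible Euclidean billiard partition with `d`
parts and a weakly decreasing list of `d` even natural numbers; conversely
every such sum is a Euclidean billiard partition. -/
theorem ebp_decomposition :
    (∀ L : List ℕ, EBP L →
      ∃! p : List ℕ × List ℕ,
        IrrEBP p.1 ∧ p.1.length = L.length ∧ p.2.length = L.length ∧
          p.2.Chain' (· ≥ ·) ∧ (∀ m ∈ p.2, Even m) ∧
          L = List.zipWith (· + ·) p.1 p.2) ∧
    (∀ L₁ L₂ : List ℕ, IrrEBP L₁ → L₂.length = L₁.length →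
      L₂.Chain' (· ≥ ·) → (∀ m ∈ L₂, Even m) →
      EBP (List.zipWith (· + ·) L₁ L₂)) := by
  constructor
  · intro L hL
    obtain ⟨hne, hpos, hdec, hlast, hnoodd⟩ := hL
    obtain ⟨m, l, rfl⟩ : ∃ m l, L = m :: l := by
      cases L with
      | nil => exact absurd rfl hne
      | cons m l => exact ⟨m, l, rfl⟩
    have hparle := core_par_le l m hdec hpos hlast
    have hclen := core_length l m
    have hcore_irr : IrrEBP (core (m :: l)) := by
      refine ⟨⟨?_, ?_, ?_, ?_, ?_⟩, ?_, ?_⟩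
      · obtain ⟨c, t, hc⟩ := core_cons m l
        simp [hc]
      · intro x hx
        have := core_two_le l m x hx
        omega
      · exact (core_chain l m).imp fun a b h => h.1
      · rw [core_getLastD]
        exact even_two
      · refine chain'_transfer (P := fun a n => a % 2 = n % 2)
          ?_ _ _ (hparle.imp fun a b h => h.1) hnoodd
        intro a a' b b' h1 h2 h3
        rw [Nat.odd_iff, Nat.odd_iff] at h3 ⊢
        omega
      · exact core_getLastD l m 1
      · exact (core_chain l m).imp fun a b h => h.2
    refine ⟨⟨core (m :: l), List.zipWith (· - ·) (m :: l) (core (m :: l))⟩,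
      ⟨hcore_irr, hclen, ?_, sub_chain l m hdec hparle, sub_even hparle,
        sum_eq (hparle.imp fun a b h => h.2)⟩, ?_⟩
    · rw [List.length_zipWith, hclen]
      exact min_self _
    · rintro ⟨A, B⟩ ⟨⟨⟨hAne, hApos, hAdec, hAlast, hAnoodd⟩, hA2, hAgap⟩,
        hAlen, hBlen, hBchain, hBev, hsum⟩
      have hAB : A.length = B.length := by rw [hAlen, hBlen]
      have hpl := par_le_of_sum A B hAB hBev
      rw [← hsum] at hpl
      have hA : A = core (m :: l) :=
        uniq_core l m A hAdec hAgap hA2 (hpl.imp fun a b h => h.1)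
      have hB : B = List.zipWith (· - ·) (m :: l) A := by
        rw [hsum]
        exact sub_of_sum A B hAB
      exact Prod.ext hA (by rw [hB, hA])
  · intro A B hA hBlen hBchain hBev
    obtain ⟨⟨hne, hpos, hdec, hlast, hnoodd⟩, h2, hgap⟩ := hA
    obtain ⟨a, A', rfl⟩ : ∃ a A', A = a :: A' := by
      cases A with
      | nil => exact absurd rfl hne
      | cons a A' => exact ⟨a, A', rfl⟩
    obtain ⟨b, B', rfl⟩ : ∃ b B', B = b :: B' := by
      cases B with
      | nil => simp at hBlen
      | cons b B' => exact ⟨b, B', rfl⟩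
    have hlen' : A'.length = B'.length := by simpa using hBlen.symm
    refine ⟨?_, zip_pos _ _ hpos, ?_, ?_, ?_⟩
    · simp
    · refine zip_chain ?_ _ _ hdec hBchain
      intro x x' y y' h1 h2
      omega
    · rw [zip_last A' B' a b 1 hlen', h2]
      have hmem : (b :: B').getLastD 1 ∈ b :: B' := by
        rw [List.getLastD_cons]
        exact List.getLastD_mem_cons
      have := hBev _ hmem
      rw [Nat.even_iff] at this ⊢
      omega
    · refine zip_chain ?_ _ _ hnoodd (chain'_pair_of_all (P := Even) _ hBev)
      intro x x' y y' h1 h2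
      obtain ⟨e1, e2⟩ := h2
      rw [Nat.even_iff] at e1 e2
      rw [Nat.odd_iff, Nat.odd_iff] at h1 ⊢
      omega
end

section
/- For d > 1, the generating polynomial s(d, 2n) for irreducible Euclidean billiard partitions with d parts and largest part 2n satisfies the recurrence s(d, 2n) = q^{2n} ( s(d-1, 2n-1) + x · s(d-1, 2n-2) ), where the x-weight of a partition with d parts, largest part N, and s odd parts is x^{d-1-2s} if N is even and x^{d-2s} if N is odd. -/
/-- The number of odd parts of a list. -/
def oddCount (L : List ℕ) : ℕ := (L.filter fun m => m % 2 = 1).length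

/-- The weight exponent: `d - 1 - 2s` if the largest part is even and
`d - 2s` if it is odd, where `d` is the number of parts and `s` the number
of odd parts. -/
def wt (L : List ℕ) : ℕ :=
  if L.headD 0 % 2 = 0 then L.length - 1 - 2 * oddCount L
  else L.length - 2 * oddCount L

-- finiteness
lemma finS (d N : ℕ) : {L : List ℕ | IrrEBP L ∧ L.length = d ∧ L.headD 0 = N}.Finite := by
  have hbd : ∀ L ∈ {L : List ℕ | IrrEBP L ∧ L.length = d ∧ L.headD 0 = N},
      ∀ x ∈ L, x ≤ N := by
    rintro L ⟨⟨⟨hne, hpos, hgt, _⟩, _⟩, hlen, hhead⟩ x hx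
    rcases L with _ | ⟨a, l⟩
    · exact absurd rfl hne
    · have hp : (a :: l).Pairwise (· > ·) := List.isChain_iff_pairwise.mp hgt
      simp only [List.headD_cons] at hhead
      subst hhead
      rcases List.mem_cons.mp hx with rfl | hx
      · exact le_refl x
      · exact le_of_lt (List.rel_of_pairwise_cons hp hx)
  have key : Set.InjOn (List.map fun k : ℕ => (⟨min k N, by omega⟩ : Fin (N+1)))
      {L : List ℕ | IrrEBP L ∧ L.length = d ∧ L.headD 0 = N} := by
    intro L1 h1 L2 h2 heq
    have e1 : ∀ L ∈ {L : List ℕ | IrrEBP L ∧ L.length = d ∧ L.headD 0 = N},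
        (L.map fun k : ℕ => (⟨min k N, by omega⟩ : Fin (N+1))).map Fin.val = L := by
      intro L hL
      rw [List.map_map]
      refine List.map_congr_left (fun x hx => ?_) |>.trans (List.map_id L)
      simp [min_eq_left (hbd L hL x hx)]
    rw [← e1 L1 h1, ← e1 L2 h2, heq]
  apply Set.Finite.of_finite_image _ key
  apply (List.finite_length_eq (Fin (N+1)) d).subset
  rintro _ ⟨L, hL, rfl⟩
  simp [hL.2.1]


lemma oc_bound : ∀ (L : List ℕ), L.Chain' (fun a b => ¬(Odd a ∧ Odd b)) →
    Even (L.getLastD 1) →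
    2 * oddCount L ≤ L.length ∧
      (L ≠ [] → L.headD 0 % 2 = 0 → 2 * oddCount L + 1 ≤ L.length) := by
  intro L
  induction L with
  | nil => intro _ _; simp [oddCount]
  | cons a l ih =>
    intro hc hl
    rcases l with _ | ⟨b, t⟩
    · have ha : a % 2 = 0 := Nat.even_iff.mp (by simpa using hl)
      simp [oddCount, ha]
    · have hl' : Even ((b :: t).getLastD 1) := by
        simpa [List.getLastD_eq_getLast?, List.getLast?_cons_cons] using hl
      have hc' := (List.isChain_cons_cons.mp hc).2
      have hab := (List.isChain_cons_cons.mp hc).1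
      have IH := ih hc' hl'
      have hlen : (a :: b :: t).length = (b :: t).length + 1 := rfl
      rcases Nat.even_or_odd a with he | ho
      · have ha : a % 2 = 0 := Nat.even_iff.mp he
        have hoc : oddCount (a :: b :: t) = oddCount (b :: t) := by
          simp [oddCount, List.filter_cons, ha]
        constructor
        · rw [hoc, hlen]; omega
        · intro _ _; rw [hoc, hlen]
          have := IH.1; omega
      · have ha : a % 2 = 1 := Nat.odd_iff.mp ho
        have hb : b % 2 = 0 := by
          by_contra h
          exact hab ⟨ho, Nat.odd_iff.mpr (by omega)⟩
        have hoc : oddCount (a :: b :: t) = oddCount (b :: t) + 1 := by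
          simp [oddCount, List.filter_cons, ha]
        have := IH.2 (by simp) (by simpa using hb)
        constructor
        · rw [hoc, hlen]; omega
        · intro _ h; rw [List.headD_cons] at h; omega

lemma getLastD_tail (b : ℕ) (t : List ℕ) (a x : ℕ) :
    (a :: b :: t).getLastD x = (b :: t).getLastD x := by
  simp [List.getLastD_eq_getLast?, List.getLast?_cons_cons]

lemma mem_cons_iff (d n : ℕ) (hd : 1 < d) (hn : 1 ≤ n) (L : List ℕ) :
    (IrrEBP L ∧ L.length = d ∧ L.headD 0 = 2*n) ↔
    ∃ T, ((IrrEBP T ∧ T.length = d-1 ∧ T.headD 0 = 2*n-1) ∨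
          (IrrEBP T ∧ T.length = d-1 ∧ T.headD 0 = 2*n-2)) ∧ L = 2*n :: T := by
  constructor
  · rintro ⟨⟨⟨hne, hpos, hgt, hlast, hodd⟩, h2, hdif⟩, hlen, hhead⟩
    rcases L with _ | ⟨a, l⟩
    · exact absurd rfl hne
    rcases l with _ | ⟨b, t⟩
    · simp at hlen; omega
    simp only [List.headD_cons] at hhead; subst hhead
    have hT : IrrEBP (b :: t) ∧ (b :: t).length = d - 1 ∧
        ((b :: t).headD 0 = 2*n-1 ∨ (b :: t).headD 0 = 2*n-2) := by
      refine ⟨⟨⟨by simp, fun m hm => hpos m (List.mem_cons_of_mem _ hm),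
        (List.isChain_cons_cons.mp hgt).2, ?_, (List.isChain_cons_cons.mp hodd).2⟩,
        ?_, (List.isChain_cons_cons.mp hdif).2⟩, ?_, ?_⟩
      · rwa [getLastD_tail] at hlast
      · rwa [getLastD_tail] at h2
      · simp at hlen ⊢; omega
      · have h1 : 2*n > b := (List.isChain_cons_cons.mp hgt).1
        have h2 : 2*n ≤ b + 2 := (List.isChain_cons_cons.mp hdif).1
        simp only [List.headD_cons]; omega
    rcases hT with ⟨hI, hl, hh | hh⟩
    · exact ⟨b :: t, Or.inl ⟨hI, hl, hh⟩, rfl⟩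
    · exact ⟨b :: t, Or.inr ⟨hI, hl, hh⟩, rfl⟩
  · rintro ⟨T, hT, rfl⟩
    have hT' : IrrEBP T ∧ T.length = d-1 ∧
        (T.headD 0 = 2*n-1 ∨ T.headD 0 = 2*n-2) := by tauto
    rcases hT' with ⟨⟨⟨hne, hpos, hgt, hlast, hodd⟩, h2, hdif⟩, hlen, hhead⟩
    rcases T with _ | ⟨b, t⟩
    · exact absurd rfl hne
    simp only [List.headD_cons] at hhead
    have hbpos : 0 < b := hpos b (List.mem_cons_self)
    refine ⟨⟨⟨by simp, ?_, List.isChain_cons_cons.mpr ⟨by omega, hgt⟩, ?_,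
      List.isChain_cons_cons.mpr ⟨?_, hodd⟩⟩, ?_, List.isChain_cons_cons.mpr ⟨by omega, hdif⟩⟩, ?_, by simp⟩
    · rintro m hm
      rcases List.mem_cons.mp hm with rfl | hm
      · omega
      · exact hpos m hm
    · rwa [getLastD_tail]
    · rintro ⟨h, -⟩
      rw [Nat.odd_iff] at h; omega
    · rwa [getLastD_tail]
    · simp at hlen ⊢; omega

lemma wt_cons_odd (n : ℕ) (T : List ℕ) (hT : T.headD 0 % 2 = 1) :
    wt (2*n :: T) = wt T := by
  rcases T with _ | ⟨b, t⟩
  · simp at hT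
  simp only [List.headD_cons] at hT
  simp [wt, oddCount, List.filter_cons, Nat.mul_mod_right, hT]

lemma wt_cons_even (n : ℕ) (T : List ℕ) (hne : T ≠ []) (heven : T.headD 0 % 2 = 0)
    (hc : T.Chain' fun a b => ¬(Odd a ∧ Odd b)) (hl : Even (T.getLastD 1)) :
    wt (2*n :: T) = wt T + 1 := by
  have hb := (oc_bound T hc hl).2 hne heven
  rcases T with _ | ⟨b, t⟩
  · exact absurd rfl hne
  simp only [List.headD_cons] at heven
  have hoc : oddCount (2*n :: b :: t) = oddCount (b :: t) := by
    simp [oddCount, List.filter_cons, Nat.mul_mod_right]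
  simp only [wt, List.headD_cons, Nat.mul_mod_right, heven, if_true, hoc,
    List.length_cons] at *
  omega

/-- The generating polynomial `s(d, N) = Σ_π x^{wt π} q^{|π|}` over irreducible
Euclidean billiard partitions with `d` parts and largest part `N`, where
`x = X 0` and `q = X 1`. -/
noncomputable def sPoly (d N : ℕ) : MvPolynomial (Fin 2) ℤ :=
  ∑ᶠ L ∈ {L : List ℕ | IrrEBP L ∧ L.length = d ∧ L.headD 0 = N},
    MvPolynomial.X 0 ^ wt L * MvPolynomial.X 1 ^ L.sum

open MvPolynomial

lemma sPoly_eq_sum (d N : ℕ) {s : Set (List ℕ)}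
    (hs : s = {L : List ℕ | IrrEBP L ∧ L.length = d ∧ L.headD 0 = N}) (h : s.Finite) :
    sPoly d N = ∑ L ∈ h.toFinset, X 0 ^ wt L * X 1 ^ L.sum := by
  subst hs
  rw [sPoly]
  exact finsum_mem_eq_finite_toFinset_sum _ h

lemma sPoly_head_zero (d : ℕ) (hd : 0 < d) : sPoly d 0 = 0 := by
  rw [sPoly_eq_sum d 0 rfl (finS d 0)]
  apply Finset.sum_eq_zero
  intro L hL
  exfalso
  rw [Set.Finite.mem_toFinset] at hL
  obtain ⟨⟨⟨hne, hpos, _⟩, _⟩, hlen, hhead⟩ := hL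
  rcases L with _ | ⟨a, l⟩
  · exact hne rfl
  · simp only [List.headD_cons] at hhead
    exact absurd (hpos a (List.mem_cons_self)) (by omega)


/-- The recurrence `s(d, 2n) = q^{2n} (s(d-1, 2n-1) + x · s(d-1, 2n-2))`
for `d > 1`. -/
theorem sPoly_even_rec (d n : ℕ) (hd : 1 < d) :
    sPoly d (2 * n) =
      MvPolynomial.X 1 ^ (2 * n) *
        (sPoly (d - 1) (2 * n - 1) +
          MvPolynomial.X 0 * sPoly (d - 1) (2 * n - 2)) := by
  rcases Nat.eq_zero_or_pos n with rfl | hn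
  · simp only [Nat.mul_zero, Nat.zero_sub]
    rw [sPoly_head_zero d (by omega), sPoly_head_zero (d-1) (by omega)]
    ring
  -- n ≥ 1
  set A : Set (List ℕ) :=
    {L : List ℕ | IrrEBP L ∧ L.length = d - 1 ∧ L.headD 0 = 2*n-1} with hA
  set B : Set (List ℕ) :=
    {L : List ℕ | IrrEBP L ∧ L.length = d - 1 ∧ L.headD 0 = 2*n-2} with hB
  have hAfin : A.Finite := finS _ _
  have hBfin : B.Finite := finS _ _
  have hset : {L : List ℕ | IrrEBP L ∧ L.length = d ∧ L.headD 0 = 2*n} =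
      (fun T => 2*n :: T) '' (A ∪ B) := by
    ext L
    rw [Set.mem_setOf_eq, mem_cons_iff d n hd hn L]
    constructor
    · rintro ⟨T, hT | hT, rfl⟩
      · exact ⟨T, Or.inl hT, rfl⟩
      · exact ⟨T, Or.inr hT, rfl⟩
    · rintro ⟨T, hT | hT, rfl⟩
      · exact ⟨T, Or.inl hT, rfl⟩
      · exact ⟨T, Or.inr hT, rfl⟩
  have hinj : Set.InjOn (fun T : List ℕ => 2*n :: T) (A ∪ B) :=
    fun x _ y _ h => by simpa using h
  have hdisj : Disjoint A B := by
    rw [Set.disjoint_left]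
    rintro T ⟨_, _, h1⟩ ⟨_, _, h2⟩
    omega
  rw [sPoly, hset, finsum_mem_image hinj,
    finsum_mem_union hdisj hAfin hBfin,
    ← hAfin.coe_toFinset, ← hBfin.coe_toFinset,
    finsum_mem_coe_finset, finsum_mem_coe_finset,
    sPoly_eq_sum (d-1) (2*n-1) hA hAfin, sPoly_eq_sum (d-1) (2*n-2) hB hBfin]
  rw [mul_add, Finset.mul_sum, ← mul_assoc, Finset.mul_sum]
  congr 1
  · apply Finset.sum_congr rfl
    intro T hT
    rw [Set.Finite.mem_toFinset] at hT
    obtain ⟨hI, hlen, hhead⟩ := hT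
    have hodd : T.headD 0 % 2 = 1 := by omega
    rw [wt_cons_odd n T hodd, List.sum_cons, pow_add]
    ring
  · apply Finset.sum_congr rfl
    intro T hT
    rw [Set.Finite.mem_toFinset] at hT
    obtain ⟨hI, hlen, hhead⟩ := hT
    obtain ⟨⟨hne, hpos, hgt, hlast, hoddc⟩, h2, hdif⟩ := hI
    have heven : T.headD 0 % 2 = 0 := by omega
    rw [wt_cons_even n T hne heven hoddc hlast, List.sum_cons, pow_add, pow_add, pow_one]
    ring
end

section
/- For d > 1, the generating polynomial s(d, 2n+1) for irreducible Euclidean billiard partitions with d parts and largest (odd) part 2n+1 satisfies s(d, 2n+1) = q^{2n+1} · s(d-1, 2n). -/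
/- ---- auxiliary lemmas ---- -/

lemma getLastD_indep : ∀ (L : List ℕ), L ≠ [] → ∀ d d' : ℕ, L.getLastD d = L.getLastD d'
  | [], h => absurd rfl h
  | [x], _ => fun d d' => by simp
  | x :: y :: t, _ => fun d d' => by
      simp only [List.getLastD_cons]

lemma finite_bdd (k M : ℕ) : {L : List ℕ | L.length = k ∧ ∀ x ∈ L, x < M}.Finite := by
  induction k with
  | zero =>
    refine (Set.finite_singleton ([] : List ℕ)).subset ?_
    rintro L ⟨h, -⟩
    simp [List.length_eq_zero_iff.mp h]
  | succ k ih =>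
    refine Set.Finite.subset ((Set.finite_Iio M).biUnion
      (fun a _ => ih.image (fun t => a :: t))) ?_
    rintro (_ | ⟨a, t⟩) ⟨hl, hb⟩
    · simp at hl
    · refine Set.mem_biUnion (show a ∈ Set.Iio M from hb a (by simp)) ?_
      exact ⟨t, ⟨by simpa using hl, fun x hx => hb x (by simp [hx])⟩, rfl⟩

/-- The structure of irreducible EBPs with odd largest part `2n+1`. -/
lemma mem_iff_odd (d n : ℕ) (hd : 1 < d) (L : List ℕ) :
    (IrrEBP L ∧ L.length = d ∧ L.headD 0 = 2 * n + 1) ↔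
    ∃ L', (IrrEBP L' ∧ L'.length = d - 1 ∧ L'.headD 0 = 2 * n) ∧ L = (2 * n + 1) :: L' := by
  constructor
  · rintro ⟨⟨⟨hne, hpos, hdec, hlast, hodd⟩, hmin, hgap⟩, hlen, hhead⟩
    match L, hne with
    | a :: rest, _ =>
      have ha : a = 2 * n + 1 := by simpa using hhead
      match rest, (by simp at hlen; omega : rest.length = d - 1),
          (by omega : d - 1 ≠ 0) with
      | b :: t, hrl, _ =>
        subst ha
        simp only [List.Chain'] at hdec hodd hgap
        rw [List.isChain_cons_cons] at hdec hodd hgap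
        have hbe : b % 2 = 0 := by
          have : ¬ b % 2 = 1 := fun hb => hodd.1 ⟨⟨n, by ring⟩, Nat.odd_iff.mpr hb⟩
          omega
        have hb : b = 2 * n := by
          have h1 := hdec.1
          have h2 := hgap.1
          omega
        have hlast' : (List.getLastD ((2 * n + 1) :: b :: t) 1) = (b :: t).getLastD 1 := by
          rw [List.getLastD_cons]
          exact getLastD_indep _ (by simp) _ _
        refine ⟨b :: t, ⟨⟨⟨by simp, fun m hm => hpos m (by simp [hm]),
          hdec.2, ?_, hodd.2⟩, ?_, hgap.2⟩, hrl, by simpa using hb⟩, rfl⟩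
        · rwa [hlast'] at hlast
        · rwa [hlast'] at hmin
  · rintro ⟨L', ⟨⟨⟨hne, hpos, hdec, hlast, hodd⟩, hmin, hgap⟩, hlen, hhead⟩, rfl⟩
    match L', hne with
    | b :: t, _ =>
      have hb : b = 2 * n := by simpa using hhead
      subst hb
      have hlast' : (List.getLastD ((2 * n + 1) :: 2 * n :: t) 1) = (2 * n :: t).getLastD 1 := by
        rw [List.getLastD_cons]
        exact getLastD_indep _ (by simp) _ _
      have hn : 0 < n := by
        by_contra h
        have := hpos (2 * n) (by simp)
        omega
      refine ⟨⟨⟨by simp, ?_, ?_, by rwa [hlast'], ?_⟩, by rwa [hlast'], ?_⟩, ?_, by simp⟩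
      · rintro m hm
        rcases List.mem_cons.mp hm with rfl | hm
        · omega
        · exact hpos m hm
      · exact List.isChain_cons_cons.mpr ⟨by omega, hdec⟩
      · refine List.isChain_cons_cons.mpr ⟨?_, hodd⟩
        rintro ⟨-, h2⟩
        rw [Nat.odd_iff] at h2
        omega
      · exact List.isChain_cons_cons.mpr ⟨by omega, hgap⟩
      · simp at hlen ⊢
        omega

/-- The recurrence `s(d, 2n+1) = q^{2n+1} · s(d-1, 2n)` for `d > 1`. -/
theorem sPoly_odd_rec (d n : ℕ) (hd : 1 < d) :
    sPoly d (2 * n + 1) =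
      MvPolynomial.X 1 ^ (2 * n + 1) * sPoly (d - 1) (2 * n) := by
  classical
  set S : Set (List ℕ) :=
    {L : List ℕ | IrrEBP L ∧ L.length = d ∧ L.headD 0 = 2 * n + 1} with hS
  set T : Set (List ℕ) :=
    {L : List ℕ | IrrEBP L ∧ L.length = d - 1 ∧ L.headD 0 = 2 * n} with hT
  have memS : ∀ L, L ∈ S ↔ ∃ L' ∈ T, L = (2 * n + 1) :: L' := by
    intro L
    rw [hS, Set.mem_setOf_eq, mem_iff_odd d n hd L]
    constructor
    · rintro ⟨L', h1, h2⟩; exact ⟨L', h1, h2⟩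
    · rintro ⟨L', h1, h2⟩; exact ⟨L', h1, h2⟩
  -- the bijection `tail : S → T`
  have hbij : Set.BijOn List.tail S T := by
    refine ⟨?_, ?_, ?_⟩
    · intro L hL
      obtain ⟨L', hL', rfl⟩ := (memS L).mp hL
      simpa using hL'
    · intro L1 h1 L2 h2 h
      obtain ⟨L1', hL1', rfl⟩ := (memS L1).mp h1
      obtain ⟨L2', hL2', rfl⟩ := (memS L2).mp h2
      simpa using h
    · intro L' hL'
      exact ⟨(2 * n + 1) :: L', (memS _).mpr ⟨L', hL', rfl⟩, rfl⟩
  -- T is finite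
  have hTfin : T.Finite := by
    refine (finite_bdd (d - 1) (2 * n + 1)).subset ?_
    rintro L ⟨⟨⟨hne, -, hdec, -, -⟩, -, -⟩, hlen, hhead⟩
    refine ⟨hlen, ?_⟩
    match L, hne with
    | b :: t, _ =>
      have hb : b = 2 * n := by simpa using hhead
      simp only [List.Chain'] at hdec
      rw [List.isChain_iff_pairwise, List.pairwise_cons] at hdec
      intro x hx
      rcases List.mem_cons.mp hx with rfl | hx
      · omega
      · have := hdec.1 x hx
        omega
  -- summand correspondence
  have hfe : ∀ L ∈ S,
      (MvPolynomial.X 0 ^ wt L * MvPolynomial.X 1 ^ L.sum : MvPolynomial (Fin 2) ℤ) =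
        MvPolynomial.X 1 ^ (2 * n + 1) *
          (MvPolynomial.X 0 ^ wt L.tail * MvPolynomial.X 1 ^ L.tail.sum) := by
    intro L hL
    obtain ⟨L', hL', rfl⟩ := (memS L).mp hL
    obtain ⟨⟨⟨hne, -, -, -, -⟩, -, -⟩, hlen, hhead⟩ := hL'
    have hwt : wt ((2 * n + 1) :: L') = wt L' := by
      have hoc : oddCount ((2 * n + 1) :: L') = oddCount L' + 1 := by
        simp only [oddCount, List.filter_cons]
        rw [if_pos (by simp [Nat.mul_add_mod])]
        simp
      have hlen' : 0 < L'.length := List.length_pos_iff.mpr hne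
      rw [wt, wt, hoc]
      simp only [List.headD_cons, hhead]
      simp only [show ¬ ((2 * n + 1) % 2 = 0) by omega, show 2 * n % 2 = 0 by omega, if_true, if_false]
      simp only [List.length_cons]
      omega
    rw [List.tail_cons, hwt, List.sum_cons, pow_add]
    ring
  show (∑ᶠ L ∈ S, MvPolynomial.X 0 ^ wt L * MvPolynomial.X 1 ^ L.sum) = _
  rw [finsum_mem_eq_of_bijOn (g := fun L => MvPolynomial.X 1 ^ (2 * n + 1) *
      (MvPolynomial.X 0 ^ wt L * MvPolynomial.X 1 ^ L.sum)) List.tail hbij hfe]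
  show (∑ᶠ L ∈ T, MvPolynomial.X 1 ^ (2 * n + 1) *
      (MvPolynomial.X 0 ^ wt L * MvPolynomial.X 1 ^ L.sum)) =
    MvPolynomial.X 1 ^ (2 * n + 1) *
      ∑ᶠ L ∈ T, MvPolynomial.X 0 ^ wt L * MvPolynomial.X 1 ^ L.sum
  rw [← hTfin.coe_toFinset, finsum_mem_coe_finset, finsum_mem_coe_finset, Finset.mul_sum]
end

section
/- For all d ≥ 1 and n ≥ 1, s(d, 2n) = x^{2n-d-1} q^{2n² - 2dn - n + d² + 2d} · C(n-1, 2n-d-1)_{q²}, where C(A,B)_{q²} denotes the Gaussian binomial coefficient in the variable q². -/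
/-- The Gaussian binomial coefficient `[a choose b]_t`, defined via the
`q`-Pascal recurrence `[a+1, b+1]_t = [a, b]_t + t^{b+1} [a, b+1]_t`. -/
def gbinom {R : Type*} [CommRing R] (t : R) : ℕ → ℕ → R
  | _, 0 => 1
  | 0, _ + 1 => 0
  | a + 1, b + 1 => gbinom t a b + t ^ (b + 1) * gbinom t a (b + 1)

/-- The Gaussian binomial with an integer lower index, equal to `0` when the
lower index is negative. -/
def gbinomZ {R : Type*} [CommRing R] (t : R) (a : ℕ) (b : ℤ) : R :=
  if 0 ≤ b then gbinom t a b.toNat else 0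

variable {R : Type*} [CommRing R] (t : R)

lemma gbinom_zero_right (a : ℕ) : gbinom t a 0 = 1 := by cases a <;> rfl

lemma gbinom_succ_succ (a b : ℕ) :
    gbinom t (a + 1) (b + 1) = gbinom t a b + t ^ (b + 1) * gbinom t a (b + 1) := rfl

lemma gbinom_eq_zero {a b : ℕ} (h : a < b) : gbinom t a b = 0 := by
  induction a generalizing b with
  | zero => cases b with
    | zero => omega
    | succ b => rfl
  | succ a ih =>
    cases b with
    | zero => omega
    | succ b => rw [gbinom_succ_succ, ih (by omega), ih (by omega)]; ring

lemma gbinom_self (a : ℕ) : gbinom t a a = 1 := by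
  induction a with
  | zero => rfl
  | succ a ih => rw [gbinom_succ_succ, ih, gbinom_eq_zero t (by omega)]; ring

lemma gbinom_pascal2 : ∀ a b : ℕ, b ≤ a →
    gbinom t (a + 1) (b + 1) = gbinom t a (b + 1) + t ^ (a - b) * gbinom t a b := by
  intro a
  induction a with
  | zero =>
    intro b hb
    interval_cases b
    simp [gbinom_succ_succ, gbinom_zero_right, gbinom_eq_zero t (by omega : (0:ℕ) < 1)]
  | succ a ih =>
    intro b hb
    cases b with
    | zero =>
      rw [gbinom_succ_succ t (a+1) 0]
      conv_lhs => rw [ih 0 (by omega)]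
      conv_rhs => rw [gbinom_succ_succ t a 0]
      simp only [gbinom_zero_right, Nat.sub_zero]
      ring
    | succ c =>
      rcases Nat.lt_or_ge c a with hca | hca
      · rw [gbinom_succ_succ t (a+1) (c+1)]
        conv_lhs => rw [ih c (by omega), ih (c+1) (by omega)]
        conv_rhs => rw [gbinom_succ_succ t a (c+1), gbinom_succ_succ t a c]
        have e1 : a + 1 - (c + 1) = (a - (c+1)) + 1 := by omega
        have e2 : a - c = (a - (c+1)) + 1 := by omega
        rw [e1, e2]
        ring
      · have hc : c = a := by omega
        rw [hc, gbinom_succ_succ t (a+1) (a+1),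
          gbinom_eq_zero t (show a+1 < a+1+1 by omega),
          show a + 1 - (a + 1) = 0 by omega]
        ring

lemma gbinom_symm : ∀ a b : ℕ, b ≤ a → gbinom t a b = gbinom t a (a - b) := by
  intro a
  induction a with
  | zero => intro b hb; interval_cases b; rfl
  | succ a ih =>
    intro b hb
    cases b with
    | zero => simp [gbinom_zero_right, gbinom_self]
    | succ c =>
      rcases Nat.lt_or_ge c a with hca | hca
      · have e1 : a + 1 - (c + 1) = (a - (c+1)) + 1 := by omega
        rw [e1, gbinom_succ_succ t a (a - (c+1))]
        rw [show gbinom t a (a - (c+1)) = gbinom t a (c+1) from by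
          rw [ih (a - (c+1)) (by omega), show a - (a - (c+1)) = c + 1 by omega]]
        rw [show gbinom t a (a - (c+1) + 1) = gbinom t a c from by
          rw [show a - (c+1) + 1 = a - c by omega, ih (a - c) (by omega),
            show a - (a - c) = c by omega]]
        rw [gbinom_pascal2 t a c (by omega), show a - (c+1) + 1 = a - c by omega]
      · have hc : c = a := by omega
        rw [hc, show a + 1 - (a+1) = 0 by omega, gbinom_zero_right, gbinom_self]

lemma sum_powersetCard (m s : ℕ) :
    ∑ S ∈ (Finset.range m).powersetCard s, t ^ (∑ k ∈ S, k)
      = t ^ (s.choose 2) * gbinom t m s := by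
  induction m generalizing s with
  | zero =>
    cases s with
    | zero => simp [gbinom_zero_right]
    | succ s =>
      have h0 : (Finset.range 0).powersetCard (s+1) = ∅ := by
        rw [Finset.powersetCard_eq_empty]
        simp
      rw [h0, show gbinom t 0 (s+1) = (0:R) from rfl]
      simp
  | succ m ih =>
    cases s with
    | zero => simp [gbinom_zero_right]
    | succ s =>
      have hmm : m ∉ Finset.range m := by simp
      rw [Finset.range_add_one, Finset.powersetCard_succ_insert hmm]
      have hdisj : Disjoint ((Finset.range m).powersetCard (s+1))
          (((Finset.range m).powersetCard s).image (insert m)) := by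
        rw [Finset.disjoint_left]
        intro S hS hS'
        rw [Finset.mem_powersetCard] at hS
        rw [Finset.mem_image] at hS'
        obtain ⟨T, hT, rfl⟩ := hS'
        have := hS.1 (Finset.mem_insert_self m T)
        simp at this
      rw [Finset.sum_union hdisj]
      have himg : ∑ S ∈ ((Finset.range m).powersetCard s).image (insert m),
          t ^ (∑ k ∈ S, k) = t ^ m * ∑ S ∈ (Finset.range m).powersetCard s,
            t ^ (∑ k ∈ S, k) := by
        rw [Finset.sum_image, Finset.mul_sum]
        · apply Finset.sum_congr rfl
          intro S hS
          rw [Finset.mem_powersetCard] at hS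
          rw [Finset.sum_insert (fun hm => by have := hS.1 hm; simp at this), pow_add]
        · intro S hS S' hS' hE
          rw [Finset.mem_coe, Finset.mem_powersetCard] at hS hS'
          have key : ∀ T : Finset ℕ, T ⊆ Finset.range m → (insert m T).erase m = T := by
            intro T hT
            exact Finset.erase_insert (fun hm => by have := hT hm; simp at this)
          rw [← key S hS.1, ← key S' hS'.1, hE]
      rw [himg, ih, ih]
      rcases Nat.lt_or_ge m s with h | h
      · rw [gbinom_eq_zero t (show m < s + 1 by omega),
          gbinom_eq_zero t (show m + 1 < s + 1 by omega),
          gbinom_eq_zero t (show m < s by omega)]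
        ring
      · rw [gbinom_pascal2 t m s (by omega)]
        have h2 : (s+1).choose 2 = s.choose 2 + s := by
          rw [Nat.choose_two_right, Nat.choose_two_right, Nat.succ_sub_one]
          exact Nat.triangle_succ s
        rw [h2]
        have hp : (t:R)^m * t^(s.choose 2) = t^(s.choose 2 + s) * t^(m-s) := by
          rw [← pow_add, ← pow_add]
          congr 1
          omega
        linear_combination gbinom t m s * hp

def bl : ℕ → Finset ℕ → List ℕ
  | 0, _ => []
  | 1, _ => [2]
  | n+2, S => (2*n+4) :: (if n ∈ S then (2*n+3) :: bl (n+1) S else bl (n+1) S)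

lemma bl_one (S : Finset ℕ) : bl 1 S = [2] := rfl

lemma bl_two (n : ℕ) (S : Finset ℕ) :
    bl (n+2) S = (2*n+4) :: (if n ∈ S then (2*n+3) :: bl (n+1) S else bl (n+1) S) := rfl

lemma bl_cons (n : ℕ) (S : Finset ℕ) : ∃ T, bl (n+1) S = (2*n+2) :: T := by
  cases n with
  | zero => exact ⟨[], rfl⟩
  | succ m =>
    exact ⟨_, by rw [bl_two, show 2*(m+1)+2 = 2*m+4 from by ring]⟩

lemma bl_head (n : ℕ) (S : Finset ℕ) : (bl (n+1) S).headD 0 = 2*n+2 := by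
  obtain ⟨T, hT⟩ := bl_cons n S
  rw [hT]; rfl

lemma bl_ne_nil (n : ℕ) (S : Finset ℕ) : bl (n+1) S ≠ [] := by
  obtain ⟨T, hT⟩ := bl_cons n S
  rw [hT]; simp

lemma bl_last (n : ℕ) (S : Finset ℕ) : ∀ d, (bl (n+1) S).getLastD d = 2 := by
  induction n with
  | zero => intro d; rfl
  | succ m ih =>
    intro d
    rw [bl_two]
    by_cases h : m ∈ S <;> simp only [h, if_true, if_false, List.getLastD_cons] <;>
      exact ih _

lemma oddCount_cons_even {m : ℕ} (h : m % 2 = 0) (l : List ℕ) :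
    oddCount (m :: l) = oddCount l := by
  simp [oddCount, List.filter_cons, h]

lemma oddCount_cons_odd {m : ℕ} (h : m % 2 = 1) (l : List ℕ) :
    oddCount (m :: l) = oddCount l + 1 := by
  simp [oddCount, List.filter_cons, h]

lemma bl_length (n : ℕ) (S : Finset ℕ) :
    (bl (n+1) S).length = n + 1 + (((Finset.range n).filter (· ∈ S)).card) := by
  induction n with
  | zero => simp [bl_one]
  | succ m ih =>
    rw [bl_two, Finset.range_add_one, Finset.filter_insert]
    by_cases h : m ∈ S
    · rw [if_pos h, if_pos h, List.length_cons, List.length_cons, ih,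
        Finset.card_insert_of_notMem (by simp)]
      omega
    · rw [if_neg h, if_neg h, List.length_cons, ih]
      omega

lemma bl_sum (n : ℕ) (S : Finset ℕ) :
    (bl (n+1) S).sum = (n+1)*(n+2) + ∑ k ∈ (Finset.range n).filter (· ∈ S), (2*k+3) := by
  induction n with
  | zero => simp [bl_one]
  | succ m ih =>
    rw [bl_two, Finset.range_add_one, Finset.filter_insert]
    by_cases h : m ∈ S
    · rw [if_pos h, if_pos h, List.sum_cons, List.sum_cons, ih,
        Finset.sum_insert (show m ∉ (Finset.range m).filter (· ∈ S) from by simp)]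
      ring
    · rw [if_neg h, if_neg h, List.sum_cons, ih]
      ring

lemma bl_oddCount (n : ℕ) (S : Finset ℕ) :
    oddCount (bl (n+1) S) = ((Finset.range n).filter (· ∈ S)).card := by
  induction n with
  | zero => simp [bl_one, oddCount]
  | succ m ih =>
    rw [bl_two, Finset.range_add_one, Finset.filter_insert]
    by_cases h : m ∈ S
    · rw [if_pos h, if_pos h, oddCount_cons_even (by omega), oddCount_cons_odd (by omega),
        ih, Finset.card_insert_of_notMem (by simp)]
    · rw [if_neg h, if_neg h, oddCount_cons_even (by omega), ih]

lemma bl_pos (n : ℕ) (S : Finset ℕ) : ∀ m ∈ bl (n+1) S, 0 < m := by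
  induction n with
  | zero => intro m hm; simp [bl_one] at hm; omega
  | succ p ih =>
    intro m hm
    rw [bl_two] at hm
    by_cases h : p ∈ S
    · rw [if_pos h] at hm
      simp only [List.mem_cons] at hm
      rcases hm with rfl | rfl | hm
      · omega
      · omega
      · exact ih m hm
    · rw [if_neg h] at hm
      simp only [List.mem_cons] at hm
      rcases hm with rfl | hm
      · omega
      · exact ih m hm

lemma bl_chain_gt (n : ℕ) (S : Finset ℕ) : (bl (n+1) S).Chain' (· > ·) := by
  induction n with
  | zero => exact List.isChain_singleton _
  | succ p ih =>
    obtain ⟨T, hT⟩ := bl_cons p S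
    rw [bl_two]
    by_cases h : p ∈ S <;> simp only [h, if_true, if_false] <;> rw [hT] <;>
      rw [hT] at ih <;> refine List.isChain_cons_cons.mpr ⟨by omega, ?_⟩
    · exact List.isChain_cons_cons.mpr ⟨by omega, ih⟩
    · exact ih

lemma bl_chain_odd (n : ℕ) (S : Finset ℕ) :
    (bl (n+1) S).Chain' fun a b => ¬(Odd a ∧ Odd b) := by
  induction n with
  | zero => exact List.isChain_singleton _
  | succ p ih =>
    obtain ⟨T, hT⟩ := bl_cons p S
    rw [bl_two]
    by_cases h : p ∈ S <;> simp only [h, if_true, if_false] <;> rw [hT] <;>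
      rw [hT] at ih <;>
      refine List.isChain_cons_cons.mpr ⟨by rintro ⟨h1, h2⟩; rw [Nat.odd_iff] at h1; omega, ?_⟩
    · exact List.isChain_cons_cons.mpr
        ⟨by rintro ⟨h1, h2⟩; rw [Nat.odd_iff] at h2; omega, ih⟩
    · exact ih

lemma bl_chain_le (n : ℕ) (S : Finset ℕ) :
    (bl (n+1) S).Chain' fun a b => a ≤ b + 2 := by
  induction n with
  | zero => exact List.isChain_singleton _
  | succ p ih =>
    obtain ⟨T, hT⟩ := bl_cons p S
    rw [bl_two]
    by_cases h : p ∈ S <;> simp only [h, if_true, if_false] <;> rw [hT] <;>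
      rw [hT] at ih <;> refine List.isChain_cons_cons.mpr ⟨by omega, ?_⟩
    · exact List.isChain_cons_cons.mpr ⟨by omega, ih⟩
    · exact ih

lemma bl_IrrEBP (n : ℕ) (S : Finset ℕ) : IrrEBP (bl (n+1) S) := by
  refine ⟨⟨bl_ne_nil n S, bl_pos n S, bl_chain_gt n S, ?_, bl_chain_odd n S⟩,
    bl_last n S 1, bl_chain_le n S⟩
  rw [bl_last n S 1]
  exact ⟨1, rfl⟩

lemma bl_mem_odd (n : ℕ) (S : Finset ℕ) (k : ℕ) :
    2*k+3 ∈ bl (n+1) S ↔ (k ∈ S ∧ k + 2 ≤ n + 1) := by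
  induction n with
  | zero => simp [bl_one]
  | succ p ih =>
    rw [bl_two]
    by_cases h : p ∈ S <;> simp only [h, if_true, if_false, List.mem_cons, ih]
    · constructor
      · rintro (h1 | h1 | ⟨h1, h2⟩)
        · omega
        · have : k = p := by omega
          exact ⟨this ▸ h, by omega⟩
        · exact ⟨h1, by omega⟩
      · rintro ⟨h1, h2⟩
        rcases Nat.lt_or_ge k p with h3 | h3
        · exact Or.inr (Or.inr ⟨h1, by omega⟩)
        · have : k = p := by omega
          exact Or.inr (Or.inl (by omega))
    · constructor
      · rintro (h1 | ⟨h1, h2⟩)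
        · omega
        · exact ⟨h1, by omega⟩
      · rintro ⟨h1, h2⟩
        rcases Nat.lt_or_ge k p with h3 | h3
        · exact Or.inr ⟨h1, by omega⟩
        · have : k = p := by omega
          subst this
          exact absurd h1 h
lemma bl_congr (n : ℕ) (S S' : Finset ℕ) (h : ∀ k < n, (k ∈ S ↔ k ∈ S')) :
    bl (n+1) S = bl (n+1) S' := by
  induction n with
  | zero => rfl
  | succ p ih =>
    rw [bl_two, bl_two, ih (fun k hk => h k (by omega))]
    by_cases hp : p ∈ S
    · rw [if_pos hp, if_pos ((h p (by omega)).mp hp)]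
    · rw [if_neg hp, if_neg (fun hc => hp ((h p (by omega)).mpr hc))]

lemma lastD_indep (l : List ℕ) (b d d' : ℕ) :
    (b :: l).getLastD d = (b :: l).getLastD d' := by
  cases l <;> rfl

lemma last_le : ∀ (T : List ℕ) (a d : ℕ), (a :: T).Chain' (· > ·) →
    (a :: T).getLastD d ≤ a := by
  intro T
  induction T with
  | nil => intro a d _; simp
  | cons b l ih =>
    intro a d h
    obtain ⟨hab, hbl⟩ := List.isChain_cons_cons.mp h
    calc (a :: b :: l).getLastD d = (b :: l).getLastD a := List.getLastD_cons ..
      _ ≤ b := ih b a hbl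
      _ ≤ a := by omega

lemma IrrEBP_tail {a b : ℕ} {l : List ℕ} (h : IrrEBP (a :: b :: l)) :
    IrrEBP (b :: l) := by
  obtain ⟨⟨hne, hpos, hgt, hev, hodd⟩, hlast, hle⟩ := h
  have hl : ∀ d : ℕ, (a :: b :: l).getLastD d = (b :: l).getLastD 1 := by
    intro d
    rw [List.getLastD_cons, lastD_indep l b a 1]
  refine ⟨⟨List.cons_ne_nil b l, fun m hm => hpos m (List.mem_cons_of_mem a hm),
    (List.isChain_cons_cons.mp hgt).2, ?_, (List.isChain_cons_cons.mp hodd).2⟩, ?_,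
    (List.isChain_cons_cons.mp hle).2⟩
  · rw [← hl 1]; exact hev
  · rw [← hl 1]; exact hlast

lemma bl_surj : ∀ (n : ℕ) (L : List ℕ), IrrEBP L → L.headD 0 = 2*n+2 →
    ∃ S, S ⊆ Finset.range n ∧ L = bl (n+1) S := by
  intro n
  induction n with
  | zero =>
    rintro L ⟨⟨hne, hpos, hgt, hev, hodd⟩, hlast, hle⟩ hhead
    cases L with
    | nil => exact absurd rfl hne
    | cons a T =>
      have ha : a = 2 := by simpa using hhead
      subst ha
      cases T with
      | nil => exact ⟨∅, by simp, rfl⟩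
      | cons t T' =>
        exfalso
        obtain ⟨h2t, hgt'⟩ := List.isChain_cons_cons.mp hgt
        have ht : t = 1 := by have := hpos t (by simp); omega
        have h1 : (2 :: t :: T').getLastD 1 = (t :: T').getLastD 2 :=
          List.getLastD_cons ..
        have h2 : (t :: T').getLastD 2 ≤ t := last_le T' t 2 hgt'
        omega
  | succ p ih =>
    rintro L hirr hhead
    obtain ⟨⟨hne, hpos, hgt, hev, hodd⟩, hlast, hle⟩ := hirr
    cases L with
    | nil => exact absurd rfl hne
    | cons a T =>
      have ha : a = 2*p+4 := by simp at hhead; omega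
      subst ha
      cases T with
      | nil =>
        exact absurd hlast (by rw [List.getLastD_cons, List.getLastD_nil]; omega)
      | cons t T' =>
        have h2t : 2*p+4 > t := (List.isChain_cons_cons.mp hgt).1
        have hlt : 2*p+4 ≤ t + 2 := (List.isChain_cons_cons.mp hle).1
        have htail : IrrEBP (t :: T') :=
          IrrEBP_tail ⟨⟨hne, hpos, hgt, hev, hodd⟩, hlast, hle⟩
        rcases (show t = 2*p+3 ∨ t = 2*p+2 by omega) with rfl | rfl
        · -- odd intermediate part
          cases T' with
          | nil =>
            exfalso
            have : ((2*p+4) :: [2*p+3]).getLastD 1 = 2*p+3 := rfl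
            omega
          | cons u T'' =>
            obtain ⟨⟨hne2, hpos2, hgt2, hev2, hodd2⟩, hlast2, hle2⟩ := id htail
            have h2u : 2*p+3 > u := (List.isChain_cons_cons.mp hgt2).1
            have hlu : 2*p+3 ≤ u + 2 := (List.isChain_cons_cons.mp hle2).1
            have hou : ¬(Odd (2*p+3) ∧ Odd u) := (List.isChain_cons_cons.mp hodd2).1
            have hu : u = 2*p+2 := by
              rcases (show u = 2*p+2 ∨ u = 2*p+1 by omega) with h | h
              · exact h
              · exfalso; exact hou ⟨⟨p+1, by omega⟩, ⟨p, by omega⟩⟩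
            subst hu
            have htail2 : IrrEBP ((2*p+2) :: T'') := IrrEBP_tail htail
            obtain ⟨S, hS, hT⟩ := ih ((2*p+2) :: T'') htail2 (by simp)
            refine ⟨insert p S, ?_, ?_⟩
            · intro k hk
              rcases Finset.mem_insert.mp hk with rfl | hk
              · simp
              · have := hS hk; simp at this ⊢; omega
            · rw [bl_two, if_pos (Finset.mem_insert_self p S)]
              rw [show bl (p+1) (insert p S) = bl (p+1) S from
                bl_congr p _ _ (fun k hk => by
                  simp only [Finset.mem_insert]
                  constructor
                  · rintro (rfl | h); omega; exact h
                  · exact Or.inr)]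
              rw [← hT]
        · -- no odd intermediate part
          obtain ⟨S, hS, hT⟩ := ih ((2*p+2) :: T') htail (by simp)
          refine ⟨S, ?_, ?_⟩
          · intro k hk
            have := hS hk; simp at this ⊢; omega
          · rw [bl_two, if_neg (fun hc => by have := hS hc; simp at this)]
            rw [← hT]


lemma two_choose_two (s : ℕ) : 2 * s.choose 2 + s = s * s := by
  induction s with
  | zero => rfl
  | succ p ih =>
    have h2 : (p+1).choose 2 = p.choose 2 + p := by
      rw [Nat.choose_two_right, Nat.choose_two_right, Nat.succ_sub_one]
      exact Nat.triangle_succ p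
    have h3 : (p+1)*(p+1) = p*p + 2*p + 1 := by ring
    omega

/-- Closed form `s(d, 2n) = x^{2n-d-1} q^{2n²-2dn-n+d²+2d} [n-1, 2n-d-1]_{q²}`
for `d, n ≥ 1`. -/
theorem sPoly_even_closed (d n : ℕ) (hd : 1 ≤ d) (hn : 1 ≤ n) :
    sPoly d (2 * n) =
      MvPolynomial.X 0 ^ (2 * n - d - 1) *
        MvPolynomial.X 1 ^ ((2 * n ^ 2 + d ^ 2 + 2 * d) - (2 * d * n + n)) *
        gbinomZ (MvPolynomial.X 1 ^ 2) (n - 1)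
          ((2 * n : ℤ) - (d : ℤ) - 1) := by
  classical
  obtain ⟨m, rfl⟩ : ∃ m, n = m + 1 := ⟨n - 1, by omega⟩
  have hfil : ∀ S : Finset ℕ, S ⊆ Finset.range m →
      (Finset.range m).filter (· ∈ S) = S := fun S hS => by
    rw [Finset.filter_mem_eq_inter, Finset.inter_eq_right.mpr hS]
  have hred : sPoly d (2 * (m+1)) =
      ∑ S ∈ (Finset.range m).powerset.filter (fun S => m + 1 + S.card = d),
        (MvPolynomial.X 0 ^ wt (bl (m+1) S) *
          MvPolynomial.X 1 ^ (bl (m+1) S).sum : MvPolynomial (Fin 2) ℤ) := by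
    have hset : {L : List ℕ | IrrEBP L ∧ L.length = d ∧ L.headD 0 = 2*(m+1)}
        = (bl (m+1)) ''
          ↑((Finset.range m).powerset.filter (fun S => m + 1 + S.card = d)) := by
      ext L
      simp only [Set.mem_setOf_eq, Set.mem_image, Finset.mem_coe,
        Finset.mem_filter, Finset.mem_powerset]
      constructor
      · rintro ⟨h1, h2, h3⟩
        obtain ⟨S, hS, rfl⟩ := bl_surj m L h1 (by rw [h3]; omega)
        exact ⟨S, ⟨hS, by rw [← h2, bl_length, hfil S hS]⟩, rfl⟩
      · rintro ⟨S, ⟨hS, hcard⟩, rfl⟩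
        refine ⟨bl_IrrEBP m S, ?_, by rw [bl_head]; omega⟩
        rw [bl_length, hfil S hS]
        exact hcard
    have hinj : Set.InjOn (bl (m+1))
        ↑((Finset.range m).powerset.filter (fun S => m + 1 + S.card = d)) := by
      intro S hS S' hS' hE
      simp only [Finset.mem_coe, Finset.mem_filter, Finset.mem_powerset] at hS hS'
      ext k
      constructor
      · intro hk
        have hkr := hS.1 hk
        rw [Finset.mem_range] at hkr
        have h1 : 2*k+3 ∈ bl (m+1) S := (bl_mem_odd m S k).mpr ⟨hk, by omega⟩
        rw [hE] at h1
        exact ((bl_mem_odd m S' k).mp h1).1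
      · intro hk
        have hkr := hS'.1 hk
        rw [Finset.mem_range] at hkr
        have h1 : 2*k+3 ∈ bl (m+1) S' := (bl_mem_odd m S' k).mpr ⟨hk, by omega⟩
        rw [← hE] at h1
        exact ((bl_mem_odd m S k).mp h1).1
    rw [sPoly, hset, finsum_mem_image hinj, finsum_mem_coe_finset]
  by_cases hcase : m + 1 ≤ d ∧ d ≤ 2*m + 1
  · obtain ⟨s, hsm, rfl⟩ : ∃ s, s ≤ m ∧ d = m + 1 + s :=
      ⟨d - (m+1), by omega, by omega⟩
    have hFc : (Finset.range m).powerset.filter (fun S => m + 1 + S.card = m + 1 + s)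
        = (Finset.range m).powersetCard s := by
      ext S
      simp only [Finset.mem_filter, Finset.mem_powerset, Finset.mem_powersetCard]
      constructor
      · rintro ⟨h1, h2⟩; exact ⟨h1, by omega⟩
      · rintro ⟨h1, h2⟩; exact ⟨h1, by omega⟩
    rw [hred, hFc]
    have hterm : ∀ S ∈ (Finset.range m).powersetCard s,
        (MvPolynomial.X 0 ^ wt (bl (m+1) S) *
          MvPolynomial.X 1 ^ (bl (m+1) S).sum : MvPolynomial (Fin 2) ℤ)
        = (MvPolynomial.X 0 ^ (m - s) *
            MvPolynomial.X 1 ^ ((m+1)*(m+2) + 3*s)) *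
            ((MvPolynomial.X 1 ^ 2) ^ (∑ k ∈ S, k)) := by
      intro S hSm
      rw [Finset.mem_powersetCard] at hSm
      obtain ⟨hsub, hcard⟩ := hSm
      have hw : wt (bl (m+1) S) = m - s := by
        rw [wt, if_pos (by rw [bl_head]; omega), bl_length, bl_oddCount,
          hfil S hsub, hcard]
        omega
      have hsum2 : ∑ k ∈ S, (2*k+3) = 2 * (∑ k ∈ S, k) + 3*s := by
        rw [Finset.sum_add_distrib, ← Finset.mul_sum, Finset.sum_const, hcard,
          smul_eq_mul]
        omega
      have hsm2 : (bl (m+1) S).sum = ((m+1)*(m+2) + 3*s) + 2 * ∑ k ∈ S, k := by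
        rw [bl_sum, hfil S hsub, hsum2]
        omega
      rw [hw, hsm2, pow_add, ← pow_mul]
      ring
    rw [Finset.sum_congr rfl hterm, ← Finset.mul_sum, sum_powersetCard]
    have hsymm := gbinom_symm (MvPolynomial.X 1 ^ 2 : MvPolynomial (Fin 2) ℤ) m s hsm
    rw [hsymm]
    have hE : (m+1)*(m+2) + 3*s + 2*(s.choose 2)
        = (2 * (m+1) ^ 2 + (m+1+s) ^ 2 + 2 * (m+1+s))
          - (2 * (m+1+s) * (m+1) + (m+1)) := by
      have e1 : (m+1)*(m+2) = m*m + 3*m + 2 := by ring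
      have e2 : 2 * (m+1) ^ 2 + (m+1+s) ^ 2 + 2 * (m+1+s)
          = 3*(m*m) + (s*s) + 2*(m*s) + 8*m + 4*s + 5 := by ring
      have e3 : 2 * (m+1+s) * (m+1) + (m+1)
          = 2*(m*m) + 2*(m*s) + 5*m + 2*s + 3 := by ring
      have hc := two_choose_two s
      omega
    have hgz : gbinomZ (MvPolynomial.X 1 ^ 2 : MvPolynomial (Fin 2) ℤ) (m + 1 - 1)
          (2 * ((m + 1 : ℕ) : ℤ) - ((m + 1 + s : ℕ) : ℤ) - 1)
        = gbinom (MvPolynomial.X 1 ^ 2 : MvPolynomial (Fin 2) ℤ) m (m - s) := by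
      rw [gbinomZ, if_pos (by omega),
        show ((2 * ((m + 1 : ℕ) : ℤ) - ((m + 1 + s : ℕ) : ℤ) - 1)).toNat = m - s
          from by omega, show m + 1 - 1 = m from rfl]
    rw [hgz, show 2 * (m+1) - (m+1+s) - 1 = m - s by omega, ← hE]
    have hpw : (MvPolynomial.X 1 : MvPolynomial (Fin 2) ℤ)
          ^ ((m+1)*(m+2) + 3*s + 2*(s.choose 2))
        = MvPolynomial.X 1 ^ ((m+1)*(m+2) + 3*s)
          * (MvPolynomial.X 1 ^ 2) ^ (s.choose 2) := by
      rw [pow_add, pow_mul]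
    rw [hpw]
    ring
  · have hFe : (Finset.range m).powerset.filter (fun S => m + 1 + S.card = d)
        = (∅ : Finset (Finset ℕ)) := by
      rw [Finset.eq_empty_iff_forall_notMem]
      intro S hSF
      simp only [Finset.mem_filter, Finset.mem_powerset] at hSF
      have h1 := Finset.card_le_card hSF.1
      rw [Finset.card_range] at h1
      omega
    rw [hred, hFe, Finset.sum_empty]
    rcases Nat.lt_or_ge d (m+1) with h | h
    · rw [gbinomZ, if_pos (by omega)]
      rw [show ((2 * ((m + 1 : ℕ) : ℤ)) - (d : ℤ) - 1).toNat = 2*m+1-d by omega]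
      rw [show m + 1 - 1 = m by omega]
      rw [gbinom_eq_zero _ (show m < 2*m+1-d by omega)]
      ring
    · rw [gbinomZ, if_neg (by omega)]
      ring
end

section
/- The number of irreducible Euclidean billiard partitions with d parts and largest part 2n equals the ordinary binomial coefficient C(n-1, 2n-d-1), and with largest part 2n+1 equals C(n-1, 2n-d). -/
/-- The binomial coefficient with integer lower index, `0` when negative. -/
def chooseZ (a : ℕ) (b : ℤ) : ℕ := if 0 ≤ b then a.choose b.toNat else 0

/-! ### Auxiliary lemmas -/

lemma irr_cons {a b : ℕ} {L : List ℕ} :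
    IrrEBP (a :: b :: L) ↔
      b < a ∧ a ≤ b + 2 ∧ ¬(Odd a ∧ Odd b) ∧ IrrEBP (b :: L) := by
  unfold IrrEBP EBP
  simp only [List.Chain', List.isChain_cons_cons, List.getLastD_cons, ne_eq, List.cons_ne_self,
    List.mem_cons, forall_eq_or_imp, not_false_iff]
  constructor
  · rintro ⟨⟨-, ⟨ha, hrest⟩, ⟨hab, hc⟩, hev, hpo, hpc⟩, hlast, hle, hlc⟩
    exact ⟨hab, hle, hpo, ⟨by simp, hrest, hc, hev, hpc⟩, hlast, hlc⟩
  · rintro ⟨hab, hle, hpo, ⟨-, hrest, hc, hev, hpc⟩, hlast, hlc⟩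
    refine ⟨⟨by simp, ⟨by omega, hrest⟩, ⟨hab, hc⟩, hev, hpo, hpc⟩, hlast, hle, hlc⟩

lemma irr_singleton {a : ℕ} : IrrEBP [a] ↔ a = 2 := by
  unfold IrrEBP EBP
  simp only [List.Chain', List.isChain_singleton, List.getLastD_cons, ne_eq, List.mem_singleton]
  constructor
  · rintro ⟨⟨-, -, -, -, -⟩, h, -⟩; simpa using h
  · rintro rfl; refine ⟨⟨by simp, ?_, trivial, by decide, trivial⟩, by simp, trivial⟩
    rintro m rfl; omega

/-- The set of irreducible EBPs with given head `h` and length `d`. -/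
def S (h d : ℕ) : Set (List ℕ) := {L | IrrEBP L ∧ L.length = d ∧ L.headD 0 = h}

lemma S_two (d : ℕ) : S 2 d = if d = 1 then {[2]} else ∅ := by
  ext L
  simp only [S, Set.mem_setOf_eq]
  constructor
  · rintro ⟨hI, rfl, hhead⟩
    match L with
    | [] => exact absurd rfl hI.1.1
    | [a] =>
      simp only [List.headD_cons] at hhead; subst hhead
      simp
    | a :: b :: T =>
      simp only [List.headD_cons] at hhead; subst hhead
      rw [irr_cons] at hI
      obtain ⟨hab, -, -, hI⟩ := hI
      have hb : 0 < b := hI.1.2.1 b (by simp)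
      have hb1 : b = 1 := by omega
      subst hb1
      exfalso
      match T, hI with
      | [], hI => rw [irr_singleton] at hI; omega
      | c :: T', hI =>
        rw [irr_cons] at hI
        have hc : 0 < c := hI.2.2.2.1.2.1 c (by simp)
        omega
  · intro hL
    split_ifs at hL with h
    · subst h
      simp only [Set.mem_singleton_iff] at hL; subst hL
      exact ⟨irr_singleton.2 rfl, rfl, rfl⟩
    · exact absurd hL (Set.notMem_empty L)

lemma S_even_rec (n d : ℕ) :
    S (2*n+4) d = (fun M => (2*n+4) :: M) '' S (2*n+2) (d-1)
      ∪ (fun M => (2*n+4) :: (2*n+3) :: M) '' S (2*n+2) (d-2) := by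
  ext L
  simp only [S, Set.mem_setOf_eq, Set.mem_union, Set.mem_image]
  constructor
  · rintro ⟨hI, rfl, hhead⟩
    match L with
    | [] => exact absurd rfl hI.1.1
    | [a] =>
      simp only [List.headD_cons] at hhead; subst hhead
      rw [irr_singleton] at hI; omega
    | a :: b :: T =>
      simp only [List.headD_cons] at hhead; subst hhead
      rw [irr_cons] at hI
      obtain ⟨hab, hle, hpar, hI⟩ := hI
      have hb : b = 2*n+2 ∨ b = 2*n+3 := by omega
      rcases hb with rfl | rfl
      · exact Or.inl ⟨(2*n+2) :: T, ⟨hI, by simp, rfl⟩, rfl⟩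
      · match T, hI with
        | [], hI =>
          exfalso; rw [irr_singleton] at hI; omega
        | c :: T', hI =>
          rw [irr_cons] at hI
          obtain ⟨hbc, hble, hbpar, hI⟩ := hI
          have hc : c = 2*n+2 := by
            rcases Nat.even_or_odd c with hce | hco
            · rw [Nat.even_iff] at hce; omega
            · exact absurd ⟨⟨n+1, by ring⟩, hco⟩ hbpar
          subst hc
          exact Or.inr ⟨(2*n+2) :: T', ⟨hI, by simp, rfl⟩, rfl⟩
  · rintro (⟨M, ⟨hI, hlen, hhead⟩, rfl⟩ | ⟨M, ⟨hI, hlen, hhead⟩, rfl⟩)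
    · match M with
      | [] => exact absurd rfl hI.1.1
      | b :: T =>
        simp only [List.headD_cons] at hhead; subst hhead
        refine ⟨irr_cons.2 ⟨by omega, by omega, ?_, hI⟩, by simp at hlen ⊢; omega, rfl⟩
        rintro ⟨h1, h2⟩; rw [Nat.odd_iff] at h1 h2; omega
    · match M with
      | [] => exact absurd rfl hI.1.1
      | b :: T =>
        simp only [List.headD_cons] at hhead; subst hhead
        refine ⟨irr_cons.2 ⟨by omega, by omega, ?_, irr_cons.2 ⟨by omega, by omega, ?_, hI⟩⟩,
          by simp at hlen ⊢; omega, rfl⟩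
        · rintro ⟨h1, h2⟩; rw [Nat.odd_iff] at h1 h2; omega
        · rintro ⟨h1, h2⟩; rw [Nat.odd_iff] at h1 h2; omega

lemma S_odd_rec (n d : ℕ) :
    S (2*n+3) d = (fun M => (2*n+3) :: M) '' S (2*n+2) (d-1) := by
  ext L
  simp only [S, Set.mem_setOf_eq, Set.mem_image]
  constructor
  · rintro ⟨hI, rfl, hhead⟩
    match L with
    | [] => exact absurd rfl hI.1.1
    | [a] =>
      simp only [List.headD_cons] at hhead; subst hhead
      rw [irr_singleton] at hI; omega
    | a :: b :: T =>
      simp only [List.headD_cons] at hhead; subst hhead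
      rw [irr_cons] at hI
      obtain ⟨hab, hle, hpar, hI⟩ := hI
      have hb : b = 2*n+2 := by
        rcases Nat.even_or_odd b with hbe | hbo
        · rw [Nat.even_iff] at hbe; omega
        · exact absurd ⟨⟨n+1, by ring⟩, hbo⟩ hpar
      subst hb
      exact ⟨(2*n+2) :: T, ⟨hI, by simp, rfl⟩, rfl⟩
  · rintro ⟨M, ⟨hI, hlen, hhead⟩, rfl⟩
    match M with
    | [] => exact absurd rfl hI.1.1
    | b :: T =>
      simp only [List.headD_cons] at hhead; subst hhead
      refine ⟨irr_cons.2 ⟨by omega, by omega, ?_, hI⟩, by simp at hlen ⊢; omega, rfl⟩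
      rintro ⟨h1, h2⟩; rw [Nat.odd_iff] at h1 h2; omega

lemma le_head {L : List ℕ} (hc : L.Chain' (· > ·)) {m : ℕ} (hm : m ∈ L) : m ≤ L.headD 0 := by
  match L with
  | [] => simp at hm
  | a :: T =>
    simp only [List.Chain'] at hc; rw [List.isChain_iff_pairwise] at hc
    rcases List.mem_cons.1 hm with rfl | h
    · simp
    · have := (List.pairwise_cons.1 hc).1 m h
      simp only [List.headD_cons]; omega

lemma desc_finite (h : ℕ) : {L : List ℕ | L.Chain' (· > ·) ∧ L.headD 0 = h}.Finite := by
  set s := {L : List ℕ | L.Chain' (· > ·) ∧ L.headD 0 = h}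
  have hinj : Set.InjOn List.toFinset s := by
    rintro L1 ⟨h1, -⟩ L2 ⟨h2, -⟩ heq
    simp only [List.Chain'] at h1 h2; rw [List.isChain_iff_pairwise] at h1 h2
    have n1 : L1.Nodup := h1.imp fun hab => ne_of_gt hab
    have n2 : L2.Nodup := h2.imp fun hab => ne_of_gt hab
    have hperm : L1.Perm L2 := List.perm_of_nodup_nodup_toFinset_eq n1 n2 heq
    exact hperm.eq_of_pairwise (fun _ _ _ _ x y => absurd (lt_trans x y) (lt_irrefl _)) h1 h2
  have himg : List.toFinset '' s ⊆ ↑((Finset.range (h+1)).powerset) := by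
    rintro x ⟨L, ⟨hc, hh⟩, rfl⟩
    simp only [Finset.coe_powerset, Set.mem_preimage, Set.mem_powerset_iff,
      Finset.coe_range]
    intro m hm
    simp only [Finset.mem_coe, List.mem_toFinset] at hm
    have := le_head hc hm
    simp only [Set.mem_Iio]
    omega
  exact Set.Finite.of_finite_image
    (Set.Finite.subset ((Finset.range (h+1)).powerset.finite_toSet) himg) hinj

lemma S_finite (h d : ℕ) : (S h d).Finite :=
  (desc_finite h).subset fun L hL => ⟨hL.1.1.2.2.1, hL.2.2⟩

lemma chooseZ_neg {a : ℕ} {b : ℤ} (h : b < 0) : chooseZ a b = 0 := if_neg (by omega)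

lemma chooseZ_eq_zero {a : ℕ} {b : ℤ} (h : (a : ℤ) < b) : chooseZ a b = 0 := by
  unfold chooseZ
  split_ifs with h0
  · exact Nat.choose_eq_zero_of_lt (by omega)
  · rfl

lemma chooseZ_pascal (m : ℕ) (k : ℤ) :
    chooseZ (m+1) (k+1) = chooseZ m k + chooseZ m (k+1) := by
  unfold chooseZ
  rcases lt_trichotomy k (-1) with h | rfl | h
  · rw [if_neg (by omega), if_neg (by omega), if_neg (by omega)]
  · norm_num
  · have hk : 0 ≤ k := by omega
    rw [if_pos (by omega), if_pos hk, if_pos (by omega)]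
    have h1 : (k+1).toNat = k.toNat + 1 := by omega
    rw [h1]
    exact Nat.choose_succ_succ' m k.toNat

lemma count_even (m : ℕ) : ∀ d : ℕ, (S (2*m+2) d).ncard = chooseZ m ((2*m+1 : ℤ) - d) := by
  induction m with
  | zero =>
    intro d
    have h2 : 2*0+2 = 2 := rfl
    rw [h2, S_two]
    match d with
    | 0 => rw [if_neg (by omega), Set.ncard_empty]; decide
    | 1 => rw [if_pos rfl, Set.ncard_singleton]; decide
    | (e+2) =>
      rw [if_neg (by omega), Set.ncard_empty, chooseZ_neg (by push_cast; omega)]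
  | succ m ih =>
    intro d
    have h4 : 2*(m+1)+2 = 2*m+4 := by ring
    rw [h4, S_even_rec]
    have hdisj : Disjoint ((fun M => (2*m+4) :: M) '' S (2*m+2) (d-1))
        ((fun M => (2*m+4) :: (2*m+3) :: M) '' S (2*m+2) (d-2)) := by
      rw [Set.disjoint_left]
      rintro x ⟨M1, hM1, rfl⟩ ⟨M2, hM2, heq⟩
      simp only [List.cons.injEq] at heq
      obtain ⟨-, rfl⟩ := heq
      have := hM1.2.2
      simp only [List.headD_cons] at this
      omega
    have hinj2 : Function.Injective (fun M : List ℕ => (2*m+4) :: (2*m+3) :: M) := by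
      intro x y hxy; simpa using hxy
    rw [Set.ncard_union_eq hdisj ((S_finite _ _).image _) ((S_finite _ _).image _),
       Set.ncard_image_of_injective _ (List.cons_injective),
       Set.ncard_image_of_injective _ hinj2, ih (d-1), ih (d-2)]
    match d with
    | 0 =>
      have z1 : chooseZ m (2*(m:ℤ)+1 - ((0-1 : ℕ) : ℤ)) = 0 := chooseZ_eq_zero (by omega)
      rw [z1, Nat.add_zero]
      exact (chooseZ_eq_zero (by omega)).symm
    | 1 =>
      have z1 : chooseZ m (2*(m:ℤ)+1 - ((1-1 : ℕ) : ℤ)) = 0 := chooseZ_eq_zero (by omega)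
      rw [z1, Nat.add_zero]
      exact (chooseZ_eq_zero (by omega)).symm
    | (e+2) =>
      rw [show ((2*(m:ℤ)+1) - ((e+2-1 : ℕ) : ℤ)) = (2*(m:ℤ) - e) from by push_cast; omega,
          show ((2*(m:ℤ)+1) - ((e+2-2 : ℕ) : ℤ)) = (2*(m:ℤ) - e) + 1 from by push_cast; omega,
          show (2 * ((m+1 : ℕ) : ℤ) + 1 - ((e+2 : ℕ) : ℤ)) = (2*(m:ℤ) - e) + 1 from by push_cast; omega]
      exact (chooseZ_pascal m _).symm

/-- The number of irreducible Euclidean billiard partitions with `d` parts and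
largest part `2n` is `C(n-1, 2n-d-1)`, and with largest part `2n+1` it is
`C(n-1, 2n-d)`. -/
theorem card_irr (d n : ℕ) (hd : 1 ≤ d) (hn : 1 ≤ n) :
    {L : List ℕ | IrrEBP L ∧ L.length = d ∧ L.headD 0 = 2 * n}.ncard =
      chooseZ (n - 1) ((2 * n : ℤ) - (d : ℤ) - 1) ∧
    {L : List ℕ | IrrEBP L ∧ L.length = d ∧ L.headD 0 = 2 * n + 1}.ncard =
      chooseZ (n - 1) ((2 * n : ℤ) - (d : ℤ)) := by
  obtain ⟨m, rfl⟩ : ∃ m, n = m + 1 := ⟨n - 1, by omega⟩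
  have e1 : 2 * (m + 1) = 2 * m + 2 := by ring
  have e2 : 2 * (m + 1) + 1 = 2 * m + 3 := by ring
  constructor
  · rw [e1]
    have : {L : List ℕ | IrrEBP L ∧ L.length = d ∧ L.headD 0 = 2 * m + 2} = S (2*m+2) d := rfl
    rw [this, count_even]
    congr 1 <;> omega
  · rw [e2]
    have : {L : List ℕ | IrrEBP L ∧ L.length = d ∧ L.headD 0 = 2 * m + 3} = S (2*m+3) d := rfl
    rw [this, S_odd_rec, Set.ncard_image_of_injective _ List.cons_injective, count_even]
    congr 1 <;> omega
end
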